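/- Let f : ℝⁿ → ℝ be convex, differentiable, L-smooth with minimizer x⋆. Let {θₖ} be positive with θ₀ = 1 and 0 ≤ θ_{k+1}² − θ_{k+1} ≤ θₖ² for all k ≥ 0, and set θ₋₁ = 0. Define the OGM iterates: y_{k+1} = xₖ − (1/L)∇f(xₖ), z_{k+1} = zₖ − (2θₖ/L)∇f(xₖ), x_{k+1} = (1 − 1/θ_{k+1})y_{k+1} + (1/θ_{k+1})z_{k+1}, with x₀ = y₀ = z₀. Define Uₖ = 2θₖ²(f(xₖ) − f(x⋆) − (1/(2L))‖∇f(xₖ)‖²) + (L/2)‖z_{k+1} − x⋆‖². Then U_{k+1} ≤ Uₖ for all k ≥ 0 (and U₀ ≤ U₋₁ with the convention x₋₁ = x₀). -/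

import Mathlib

open RealInnerProductSpace

section OGMHelpers

variable {n : ℕ}
local notation "E" => EuclideanSpace ℝ (Fin n)

lemma line_hasDerivAt (f : E → ℝ) (f' : E → E)
    (hdiff : ∀ p, HasGradientAt f (f' p) p) (u d : E) (t : ℝ) :
    HasDerivAt (fun s : ℝ => f (u + s • d)) ⟪f' (u + t • d), d⟫ t := by
  have h1 : HasFDerivAt f (InnerProductSpace.toDual ℝ _ (f' (u + t • d))) (u + t • d) :=
    (hdiff _).hasFDerivAt
  have h2 : HasDerivAt (fun s : ℝ => u + s • d) d t := by
    simpa using ((hasDerivAt_id t).smul_const d).const_add u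
  have h3 := h1.comp_hasDerivAt t h2
  simp at h3
  exact h3

lemma conv_lower (f : E → ℝ) (f' : E → E)
    (hdiff : ∀ p, HasGradientAt f (f' p) p)
    (hconv : ConvexOn ℝ Set.univ f) (u v : E) :
    f u + ⟪f' u, v - u⟫ ≤ f v := by
  have hline : ConvexOn ℝ Set.univ (fun t : ℝ => f (u + t • (v - u))) := by
    have := hconv.comp_affineMap (AffineMap.lineMap u v : ℝ →ᵃ[ℝ] E)
    simp only [Set.preimage_univ] at this
    convert this using 2 with t
    any_goals rfl
    simp [AffineMap.lineMap_apply]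
    abel_nf
  have hd : HasDerivAt (fun t : ℝ => f (u + t • (v - u))) ⟪f' u, v - u⟫ 0 := by
    simpa using line_hasDerivAt f f' hdiff u (v - u) 0
  have := hline.le_slope_of_hasDerivAt (Set.mem_univ (0:ℝ)) (Set.mem_univ (1:ℝ))
    one_pos hd
  have huv : u + (1:ℝ) • (v - u) = v := by simp
  have hu0 : u + (0:ℝ) • (v - u) = u := by simp
  rw [slope_def_field, huv, hu0, show (1:ℝ) - 0 = 1 by norm_num, div_one] at this
  linarith

lemma descent (f : E → ℝ) (f' : E → E) (L : ℝ) (hL : 0 < L)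
    (hdiff : ∀ p, HasGradientAt f (f' p) p)
    (hsmooth : ∀ x y, ‖f' x - f' y‖ ≤ L * ‖x - y‖) (u v : E) :
    f v ≤ f u + ⟪f' u, v - u⟫ + L / 2 * ‖v - u‖ ^ 2 := by
  set d := v - u with hd
  have hcf' : Continuous f' := by
    have : LipschitzWith (Real.toNNReal L) f' := by
      apply LipschitzWith.of_dist_le_mul
      intro a b
      simpa [dist_eq_norm, Real.coe_toNNReal L hL.le] using hsmooth a b
    exact this.continuous
  have hcont : Continuous (fun t : ℝ => ⟪f' (u + t • d), d⟫) := by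
    exact (hcf'.comp (by continuity)).inner continuous_const
  have hint : IntervalIntegrable (fun t : ℝ => ⟪f' (u + t • d), d⟫)
      MeasureTheory.volume 0 1 := hcont.intervalIntegrable 0 1
  have hftc : ∫ t in (0:ℝ)..1, ⟪f' (u + t • d), d⟫ = f v - f u := by
    have := intervalIntegral.integral_eq_sub_of_hasDerivAt
      (f := fun s : ℝ => f (u + s • d))
      (f' := fun t : ℝ => ⟪f' (u + t • d), d⟫)
      (a := 0) (b := 1)
      (fun t _ => line_hasDerivAt f f' hdiff u d t) hint
    rw [this]
    show f (u + (1:ℝ) • d) - f (u + (0:ℝ) • d) = f v - f u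
    rw [show u + (1:ℝ) • d = v by simp [hd], show u + (0:ℝ) • d = u by simp]
  have hmono : ∫ t in (0:ℝ)..1, (⟪f' (u + t • d), d⟫ - ⟪f' u, d⟫)
      ≤ ∫ t in (0:ℝ)..1, L * t * ‖d‖ ^ 2 := by
    apply intervalIntegral.integral_mono_on zero_le_one
      (hint.sub intervalIntegrable_const)
      (by apply Continuous.intervalIntegrable; continuity)
    intro t ht
    have hts : ⟪f' (u + t • d), d⟫ - ⟪f' u, d⟫ = ⟪f' (u + t • d) - f' u, d⟫ := by
      rw [inner_sub_left]
    rw [hts]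
    calc ⟪f' (u + t • d) - f' u, d⟫ ≤ ‖f' (u + t • d) - f' u‖ * ‖d‖ :=
          real_inner_le_norm _ _
      _ ≤ (L * ‖(u + t • d) - u‖) * ‖d‖ := by
          have := hsmooth (u + t • d) u
          nlinarith [norm_nonneg d, norm_nonneg (f' (u + t • d) - f' u)]
      _ = L * t * ‖d‖ ^ 2 := by
          have : ‖(u + t • d) - u‖ = t * ‖d‖ := by
            simp [norm_smul, abs_of_nonneg ht.1]
          rw [this]; ring
  have hval : ∫ t in (0:ℝ)..1, L * t * ‖d‖ ^ 2 = L / 2 * ‖d‖ ^ 2 := by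
    have : (fun t : ℝ => L * t * ‖d‖ ^ 2) = fun t : ℝ => (L * ‖d‖ ^ 2) * t := by
      funext t; ring
    rw [this, intervalIntegral.integral_const_mul, integral_id]
    ring
  have hsub : ∫ t in (0:ℝ)..1, (⟪f' (u + t • d), d⟫ - ⟪f' u, d⟫)
      = (f v - f u) - ⟪f' u, d⟫ := by
    rw [intervalIntegral.integral_sub hint (intervalIntegrable_const (c := ⟪f' u, d⟫)), hftc]
    simp
  rw [hsub, hval] at hmono
  linarith

lemma key_ineq (f : E → ℝ) (f' : E → E) (L : ℝ) (hL : 0 < L)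
    (hdiff : ∀ p, HasGradientAt f (f' p) p)
    (hconv : ConvexOn ℝ Set.univ f)
    (hsmooth : ∀ x y, ‖f' x - f' y‖ ≤ L * ‖x - y‖) (u v : E) :
    f u + ⟪f' u, v - u⟫ + 1 / (2 * L) * ‖f' v - f' u‖ ^ 2 ≤ f v := by
  set g := f' v - f' u with hg
  set w := v - (1 / L) • g with hw
  have h1 : f w ≤ f v + ⟪f' v, w - v⟫ + L / 2 * ‖w - v‖ ^ 2 :=
    descent f f' L hL hdiff hsmooth v w
  have h2 : f u + ⟪f' u, w - u⟫ ≤ f w := conv_lower f f' hdiff hconv u w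
  have hwv : w - v = -((1 / L) • g) := by rw [hw]; abel
  have e1 : ⟪f' v, w - v⟫ = -(1 / L) * ⟪f' v, g⟫ := by
    rw [hwv, inner_neg_right, real_inner_smul_right]; ring
  have e2 : ‖w - v‖ ^ 2 = (1 / L) ^ 2 * ‖g‖ ^ 2 := by
    rw [hwv, norm_neg, norm_smul]
    rw [Real.norm_eq_abs, abs_of_pos (by positivity : (0:ℝ) < 1 / L)]
    ring
  have e3 : ⟪f' u, w - u⟫ = ⟪f' u, v - u⟫ - (1 / L) * ⟪f' u, g⟫ := by
    rw [hw, show v - (1 / L) • g - u = (v - u) - (1 / L) • g by abel,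
      inner_sub_right, real_inner_smul_right]
  have e4 : ⟪f' v, g⟫ - ⟪f' u, g⟫ = ‖g‖ ^ 2 := by
    rw [← inner_sub_left, ← hg, real_inner_self_eq_norm_sq]
  rw [e1, e2] at h1
  rw [e3] at h2
  have hL' : L ≠ 0 := hL.ne'
  have : f u + (⟪f' u, v - u⟫ - (1 / L) * ⟪f' u, g⟫) ≤
      f v + -(1 / L) * ⟪f' v, g⟫ + L / 2 * ((1 / L) ^ 2 * ‖g‖ ^ 2) := le_trans h2 h1
  have hfin : (1 / L) * (⟪f' v, g⟫ - ⟪f' u, g⟫) = (1 / L) * ‖g‖ ^ 2 := by rw [e4]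
  have hhalf : L / 2 * ((1 / L) ^ 2 * ‖g‖ ^ 2) = 1 / (2 * L) * ‖g‖ ^ 2 := by
    field_simp
  rw [hhalf] at this
  have expand : (1 / L) * ⟪f' v, g⟫ - (1 / L) * ⟪f' u, g⟫ = (1 / L) * ‖g‖ ^ 2 := by
    rw [← mul_sub, e4]
  have h2L : 1 / (2 * L) * ‖g‖ ^ 2 + 1 / (2 * L) * ‖g‖ ^ 2 = (1 / L) * ‖g‖ ^ 2 := by
    field_simp; ring
  linarith

lemma grad_min_zero (f : E → ℝ) (f' : E → E)
    (hdiff : ∀ p, HasGradientAt f (f' p) p)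
    (xstar : E) (hmin : ∀ y, f xstar ≤ f y) : f' xstar = 0 := by
  have hloc : IsLocalMin f xstar := Filter.Eventually.of_forall hmin
  have := hloc.hasFDerivAt_eq_zero (hdiff xstar).hasFDerivAt
  have : InnerProductSpace.toDual ℝ _ (f' xstar) = InnerProductSpace.toDual ℝ _ (0 : E) := by
    simpa using this
  exact (InnerProductSpace.toDual ℝ _).injective this

end OGMHelpers

/-- Lyapunov monotonicity for the optimized gradient method (OGM). -/
theorem ogm_lyapunov_monotone (n : ℕ)
    (f : EuclideanSpace ℝ (Fin n) → ℝ)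
    (f' : EuclideanSpace ℝ (Fin n) → EuclideanSpace ℝ (Fin n))
    (L : ℝ) (hL : 0 < L)
    (hdiff : ∀ x, HasGradientAt f (f' x) x)
    (hconv : ConvexOn ℝ Set.univ f)
    (hsmooth : ∀ x y, ‖f' x - f' y‖ ≤ L * ‖x - y‖)
    (xstar : EuclideanSpace ℝ (Fin n)) (hmin : ∀ y, f xstar ≤ f y)
    (θ : ℕ → ℝ) (hθpos : ∀ k, 0 < θ k) (hθ0 : θ 0 = 1)
    (hθrec : ∀ k, 0 ≤ θ (k + 1) ^ 2 - θ (k + 1) ∧ θ (k + 1) ^ 2 - θ (k + 1) ≤ θ k ^ 2)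
    (x y z : ℕ → EuclideanSpace ℝ (Fin n))
    (hx0 : x 0 = y 0) (hz0 : z 0 = x 0)
    (hy : ∀ k, y (k + 1) = x k - (1 / L) • f' (x k))
    (hz : ∀ k, z (k + 1) = z k - (2 * θ k / L) • f' (x k))
    (hx : ∀ k, x (k + 1) = (1 - 1 / θ (k + 1)) • y (k + 1) + (1 / θ (k + 1)) • z (k + 1))
    (U : ℕ → ℝ)
    (hU : ∀ k, U k = 2 * θ k ^ 2 * (f (x k) - f xstar - (1 / (2 * L)) * ‖f' (x k)‖ ^ 2)
      + (L / 2) * ‖z (k + 1) - xstar‖ ^ 2) :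
    (∀ k, U (k + 1) ≤ U k) ∧ U 0 ≤ (L / 2) * ‖x 0 - xstar‖ ^ 2 := by
  have hstar : f' xstar = 0 := grad_min_zero f f' hdiff xstar hmin
  have hLne : L ≠ 0 := hL.ne'
  constructor
  · intro k
    have hθ1 : 0 < θ (k + 1) := hθpos (k + 1)
    have hθ1ne : θ (k + 1) ≠ 0 := hθ1.ne'
    obtain ⟨hrec1, hrec2⟩ := hθrec k
    -- z (k+1) in terms of x (k+1) and y (k+1)
    have hz3 : z (k + 1) = θ (k + 1) • x (k + 1) - (θ (k + 1) - 1) • y (k + 1) := by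
      rw [hx k]
      match_scalars <;> field_simp <;> ring
    have hz1 : z (k + 1) - xstar = θ (k + 1) • (x (k + 1) - xstar)
        - (θ (k + 1) - 1) • (x k - xstar) + ((θ (k + 1) - 1) / L) • f' (x k) := by
      rw [hz3, hy k]
      match_scalars <;> field_simp <;> ring
    have hz2 : z (k + 1 + 1) - xstar
        = (z (k + 1) - xstar) - (2 * θ (k + 1) / L) • f' (x (k + 1)) := by
      rw [hz (k + 1)]; abel
    have einner : ⟪z (k + 1) - xstar, f' (x (k + 1))⟫
        = θ (k + 1) * ⟪x (k + 1) - xstar, f' (x (k + 1))⟫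
          - (θ (k + 1) - 1) * ⟪x k - xstar, f' (x (k + 1))⟫
          + ((θ (k + 1) - 1) / L) * ⟪f' (x k), f' (x (k + 1))⟫ := by
      rw [hz1, inner_add_left, inner_sub_left, real_inner_smul_left, real_inner_smul_left,
        real_inner_smul_left]
    have ew : ‖z (k + 1 + 1) - xstar‖ ^ 2 = ‖z (k + 1) - xstar‖ ^ 2
        - 2 * (2 * θ (k + 1) / L) * ⟪z (k + 1) - xstar, f' (x (k + 1))⟫
        + (2 * θ (k + 1) / L) ^ 2 * ‖f' (x (k + 1))‖ ^ 2 := by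
      rw [hz2, @norm_sub_sq_real, real_inner_smul_right, norm_smul, mul_pow,
        Real.norm_eq_abs, sq_abs]
      ring
    -- the three instances of the key inequality
    have hI1 : ⟪x (k + 1) - xstar, f' (x (k + 1))⟫
        ≥ (f (x (k + 1)) - f xstar) + 1 / (2 * L) * ‖f' (x (k + 1))‖ ^ 2 := by
      have h := key_ineq f f' L hL hdiff hconv hsmooth (x (k + 1)) xstar
      rw [hstar, zero_sub, norm_neg] at h
      have e : ⟪f' (x (k + 1)), xstar - x (k + 1)⟫
          = -⟪x (k + 1) - xstar, f' (x (k + 1))⟫ := by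
        rw [show xstar - x (k + 1) = -(x (k + 1) - xstar) from by abel, inner_neg_right,
          real_inner_comm]
      rw [e] at h
      linarith
    have hI2 : ⟪x (k + 1) - xstar, f' (x (k + 1))⟫ - ⟪x k - xstar, f' (x (k + 1))⟫
        ≥ (f (x (k + 1)) - f (x k)) + 1 / (2 * L) * (‖f' (x k)‖ ^ 2
          - 2 * ⟪f' (x k), f' (x (k + 1))⟫ + ‖f' (x (k + 1))‖ ^ 2) := by
      have h := key_ineq f f' L hL hdiff hconv hsmooth (x (k + 1)) (x k)
      have e : ⟪f' (x (k + 1)), x k - x (k + 1)⟫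
          = ⟪x k - xstar, f' (x (k + 1))⟫ - ⟪x (k + 1) - xstar, f' (x (k + 1))⟫ := by
        rw [real_inner_comm, show x k - x (k + 1) = (x k - xstar) - (x (k + 1) - xstar)
          from by abel, inner_sub_left]
      have e2 : ‖f' (x k) - f' (x (k + 1))‖ ^ 2 = ‖f' (x k)‖ ^ 2
          - 2 * ⟪f' (x k), f' (x (k + 1))⟫ + ‖f' (x (k + 1))‖ ^ 2 := by
        rw [@norm_sub_sq_real]
      rw [e, e2] at h
      linarith
    have hI3 : f (x k) - f xstar ≥ 1 / (2 * L) * ‖f' (x k)‖ ^ 2 := by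
      have h := key_ineq f f' L hL hdiff hconv hsmooth xstar (x k)
      rw [hstar, inner_zero_left, sub_zero] at h
      linarith
    -- master identity
    have hid : U k - U (k + 1)
        = 2 * θ (k + 1) * (⟪x (k + 1) - xstar, f' (x (k + 1))⟫
            - (f (x (k + 1)) - f xstar) - 1 / (2 * L) * ‖f' (x (k + 1))‖ ^ 2)
        + 2 * (θ (k + 1) ^ 2 - θ (k + 1)) * ((⟪x (k + 1) - xstar, f' (x (k + 1))⟫
            - ⟪x k - xstar, f' (x (k + 1))⟫) - (f (x (k + 1)) - f (x k))
            - 1 / (2 * L) * (‖f' (x k)‖ ^ 2 - 2 * ⟪f' (x k), f' (x (k + 1))⟫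
              + ‖f' (x (k + 1))‖ ^ 2))
        + 2 * (θ k ^ 2 - (θ (k + 1) ^ 2 - θ (k + 1))) * ((f (x k) - f xstar)
            - 1 / (2 * L) * ‖f' (x k)‖ ^ 2) := by
      rw [hU k, hU (k + 1), ew, einner]
      field_simp
      ring
    have t1 : 0 ≤ 2 * θ (k + 1) * (⟪x (k + 1) - xstar, f' (x (k + 1))⟫
        - (f (x (k + 1)) - f xstar) - 1 / (2 * L) * ‖f' (x (k + 1))‖ ^ 2) :=
      mul_nonneg (by linarith) (by linarith)
    have t2 : 0 ≤ 2 * (θ (k + 1) ^ 2 - θ (k + 1)) * ((⟪x (k + 1) - xstar, f' (x (k + 1))⟫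
        - ⟪x k - xstar, f' (x (k + 1))⟫) - (f (x (k + 1)) - f (x k))
        - 1 / (2 * L) * (‖f' (x k)‖ ^ 2 - 2 * ⟪f' (x k), f' (x (k + 1))⟫
          + ‖f' (x (k + 1))‖ ^ 2)) :=
      mul_nonneg (by linarith) (by linarith)
    have t3 : 0 ≤ 2 * (θ k ^ 2 - (θ (k + 1) ^ 2 - θ (k + 1))) * ((f (x k) - f xstar)
        - 1 / (2 * L) * ‖f' (x k)‖ ^ 2) :=
      mul_nonneg (by linarith) (by linarith)
    linarith only [hid, t1, t2, t3]
  · -- initial bound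
    have hz01 : z 1 - xstar = (x 0 - xstar) - (2 / L) • f' (x 0) := by
      rw [hz 0, hz0, hθ0]
      match_scalars <;> field_simp
    have ew0 : ‖z 1 - xstar‖ ^ 2 = ‖x 0 - xstar‖ ^ 2
        - 2 * (2 / L) * ⟪x 0 - xstar, f' (x 0)⟫ + (2 / L) ^ 2 * ‖f' (x 0)‖ ^ 2 := by
      rw [hz01, @norm_sub_sq_real, real_inner_smul_right, norm_smul, mul_pow,
        Real.norm_eq_abs, sq_abs]
      ring
    have hI0 : ⟪x 0 - xstar, f' (x 0)⟫
        ≥ (f (x 0) - f xstar) + 1 / (2 * L) * ‖f' (x 0)‖ ^ 2 := by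
      have h := key_ineq f f' L hL hdiff hconv hsmooth (x 0) xstar
      rw [hstar, zero_sub, norm_neg] at h
      have e : ⟪f' (x 0), xstar - x 0⟫ = -⟪x 0 - xstar, f' (x 0)⟫ := by
        rw [show xstar - x 0 = -(x 0 - xstar) from by abel, inner_neg_right, real_inner_comm]
      rw [e] at h
      linarith
    have hid0 : U 0 - (L / 2) * ‖x 0 - xstar‖ ^ 2
        = 2 * ((f (x 0) - f xstar) + 1 / (2 * L) * ‖f' (x 0)‖ ^ 2
          - ⟪x 0 - xstar, f' (x 0)⟫) := by
      rw [hU 0, hθ0, ew0]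
      field_simp
      ring
    linarith only [hid0, hI0, hθpos 0]
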